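/- arXiv:1807.00643 — 5 statements merged into one kernel-verified Lean document; each statement's English description precedes it below -/
import Mathlib

section
/- If θ is a variable symmetry of a graphical model G (i.e., a permutation of the variables whose action on G returns G), then for every state s, the probability of s equals the probability of θ(s) under the distribution defined by G. -/
open scoped BigOperators

/-- The Gibbs distribution defined by a graphical model with weights `w` and features `f`
over a finite state space `S`. -/
noncomputable def gibbs {S J : Type} [Fintype S] [Fintype J]
    (w : J → ℝ) (f : J → S → ℝ) (s : S) : ℝ :=
  Real.exp (∑ j, w j * f j s) / ∑ t : S, Real.exp (∑ j, w j * f j t)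

/-- If `θ` is a variable symmetry of a graphical model `G` (i.e. the action of `θ` on `G`,
replacing each variable `X_i` by `θ(X_i)` in every feature, returns the same set of
weighted features, witnessed by a permutation `σ` of the features), then for every state `s`,
`P(s) = P(θ(s))`, where `θ(s) = s ∘ θ`. -/
theorem variable_symmetry_preserves_prob
    {V D J : Type} [Fintype V] [DecidableEq V] [Fintype D] [Fintype J]
    (w : J → ℝ) (f : J → (V → D) → ℝ) (θ : Equiv.Perm V)
    (hsym : ∃ σ : Equiv.Perm J, ∀ j, w (σ j) = w j ∧ ∀ s : V → D, f (σ j) s = f j (s ∘ θ)) :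
    ∀ s : V → D, gibbs w f s = gibbs w f (s ∘ θ) := by
  obtain ⟨σ, hσ⟩ := hsym
  have key : ∀ s : V → D, ∑ j, w j * f j (s ∘ θ) = ∑ j, w j * f j s := by
    intro s
    rw [← Equiv.sum_comp σ (fun j => w j * f j s)]
    exact Finset.sum_congr rfl fun j _ => by rw [(hσ j).1, (hσ j).2 s]
  intro s
  unfold gibbs
  rw [key s]
end

section
/- If Φ is a group of VV symmetries of a graphical model G, then for all states s and all φ ∈ Φ, P(s) = P(φ(s)). -/
open scoped BigOperators

/-- A VV permutation `φ` is valid: whenever `φ(X_i,x_i) = (X_j,x_j)` then for every value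
`x_i'` there is a value `x_j'` with `φ(X_i,x_i') = (X_j,x_j')`. -/
def ValidVV {V D : Type} (φ : Equiv.Perm (V × D)) : Prop :=
  ∀ (i : V) (x : D) (j : V) (y : D), φ (i, x) = (j, y) → ∀ x' : D, ∃ y' : D, φ (i, x') = (j, y')

/-- If `Φ` is a group of VV symmetries of a graphical model `G` (each `φ ∈ Φ` is a valid VV
permutation, `act φ` is its action on states, i.e. `φ(X_i, s(X_i)) = (X_j, x_j)` implies
`(act φ s)(X_j) = x_j`, and the action of `φ` on `G` returns the same set of weighted
features), then for all states `s` and all `φ ∈ Φ`, `P(s) = P(φ(s))`. -/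
theorem vv_symmetry_preserves_prob
    {V D J : Type} [Fintype V] [DecidableEq V] [Fintype D] [Fintype J]
    (w : J → ℝ) (f : J → (V → D) → ℝ)
    (Φ : Subgroup (Equiv.Perm (V × D)))
    (hvalid : ∀ φ ∈ Φ, ValidVV φ)
    (act : Equiv.Perm (V × D) → (V → D) → (V → D))
    (hact : ∀ φ ∈ Φ, ∀ (s : V → D) (i : V), act φ s (φ (i, s i)).1 = (φ (i, s i)).2)
    (hsym : ∀ φ ∈ Φ, ∃ σ : Equiv.Perm J, ∀ j, w (σ j) = w j ∧
      ∀ s : V → D, f (σ j) s = f j (act φ s)) :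
    ∀ φ ∈ Φ, ∀ s : V → D, gibbs w f s = gibbs w f (act φ s) := by
  intro φ hφ s
  obtain ⟨σ, hσ⟩ := hsym φ hφ
  unfold gibbs
  congr 1
  have : (∑ j, w j * f j (act φ s)) = ∑ j, w (σ j) * f (σ j) s := by
    refine Finset.sum_congr rfl fun j _ => ?_
    rw [(hσ j).1, (hσ j).2 s]
  rw [this, ← Equiv.sum_comp σ (fun j => w j * f j s)]
end

section
/- BV symmetries are probability preserving: if ψ is a BV symmetry of G under a partition Δ, then P(s) = P(ψ(s)) for all states s. -/
open scoped BigOperators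

/-- The bijective correspondence between states of `G` and states of the block-transformed
model `Ĝ` for the block partition encoded by `blk : V → L`. -/
def blockEquiv {V D L : Type} (blk : V → L) :
    (V → D) ≃ ((l : L) → {x : V // blk x = l} → D) where
  toFun s l v := s v.1
  invFun sh v := sh (blk v) ⟨v, rfl⟩
  left_inv s := rfl
  right_inv sh := by
    funext l v
    obtain ⟨x, hx⟩ := v
    subst hx
    rfl

/-- A BV permutation (a permutation of the block-value set `Δ_V`, i.e. of pairs of a block
`B_l` together with an assignment to its variables) is valid: it maps all assignments of a
block to assignments of one fixed block. -/
def ValidBV {V D L : Type} (blk : V → L)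
    (ψ : Equiv.Perm (Σ l : L, ({x : V // blk x = l} → D))) : Prop :=
  ∀ (l : L) (b : {x : V // blk x = l} → D) (l' : L) (b' : {x : V // blk x = l'} → D),
    ψ ⟨l, b⟩ = ⟨l', b'⟩ →
      ∀ b'' : {x : V // blk x = l} → D, ∃ b''' : {x : V // blk x = l'} → D,
        ψ ⟨l, b''⟩ = ⟨l', b'''⟩

/-- BV symmetries are probability preserving: if `ψ` is a BV symmetry of `G` under the
partition `blk` (i.e. the corresponding VV permutation on the block-transformed model `Ĝ`,
whose features are `f̂_j = f_j ∘ e⁻¹` with `e = blockEquiv blk`, is a VV symmetry of `Ĝ`,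
witnessed by a feature permutation `σ`; `act` is its action on the transformed states),
then `P(s) = P(ψ(s))` for all states `s`. -/
theorem bv_symmetry_preserves_prob
    {V D L J : Type} [Fintype V] [DecidableEq V] [Fintype D]
    [Fintype L] [DecidableEq L] [Fintype J]
    (blk : V → L) (w : J → ℝ) (f : J → (V → D) → ℝ)
    (ψ : Equiv.Perm (Σ l : L, ({x : V // blk x = l} → D)))
    (hvalid : ValidBV blk ψ)
    (act : ((l : L) → {x : V // blk x = l} → D) → ((l : L) → {x : V // blk x = l} → D))
    (hact : ∀ (sh : (l : L) → {x : V // blk x = l} → D) (l : L),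
      act sh (ψ ⟨l, sh l⟩).1 = (ψ ⟨l, sh l⟩).2)
    (hsym : ∃ σ : Equiv.Perm J, ∀ j, w (σ j) = w j ∧
      ∀ sh : (l : L) → {x : V // blk x = l} → D,
        f (σ j) ((blockEquiv blk).symm sh) = f j ((blockEquiv blk).symm (act sh))) :
    ∀ s : V → D,
      gibbs w f s = gibbs w f ((blockEquiv blk).symm (act (blockEquiv blk s))) := by
  intro s
  obtain ⟨σ, hσ⟩ := hsym
  have hw : ∀ j, w (σ.symm j) = w j := by
    intro j
    have := (hσ (σ.symm j)).1
    rw [Equiv.apply_symm_apply] at this; exact this.symm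
  unfold gibbs
  congr 1
  congr 1
  have hf : ∀ j, f j ((blockEquiv blk).symm (act (blockEquiv blk s))) = f (σ j) s := by
    intro j
    have := (hσ j).2 (blockEquiv blk s)
    rw [Equiv.symm_apply_apply] at this
    exact this.symm
  calc ∑ j, w j * f j s
      = ∑ j, w (σ.symm j) * f j s := by
        refine Finset.sum_congr rfl fun j _ => by rw [hw]
    _ = ∑ j, w (σ.symm (σ j)) * f (σ j) s := (Equiv.sum_comp σ _).symm
    _ = ∑ j, w j * f j ((blockEquiv blk).symm (act (blockEquiv blk s))) := by
        refine Finset.sum_congr rfl fun j _ => by rw [Equiv.symm_apply_apply, hf]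
end

section
/- Let M be a regular (irreducible and aperiodic) Markov chain on a finite state space S with stationary distribution π, and let Ψ be a group of π-preserving permutations of S. The BV-MCMC(α) chain M', which first takes a step of M to get s', then with probability α replaces s' by a uniform sample from the orbit Γ_Ψ(s') and with probability 1−α keeps s', is regular and has stationary distribution π. -/
open scoped BigOperators

/-- The orbit `Γ_Ψ(s) = {ψ(s) : ψ ∈ Ψ}` of a state `s` under a group `Ψ` of permutations
of the finite state space `S`, as a finset. -/
noncomputable def orbitFinset {S : Type} [Fintype S] (Ψ : Subgroup (Equiv.Perm S))
    (s : S) : Finset S :=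
  open scoped Classical in
  Finset.univ.filter (fun t => ∃ ψ ∈ Ψ, ψ s = t)

/-- The transition kernel of the BV-MCMC(α) chain `M'`: first take a step of `M`
(kernel `T`) to reach `s'`, then with probability `α` move to a uniform sample from the
orbit `Γ_Ψ(s')`, and with probability `1 − α` stay at `s'`. -/
noncomputable def bvKernel {S : Type} [Fintype S] [DecidableEq S]
    (Ψ : Subgroup (Equiv.Perm S)) (α : ℝ) (T : Matrix S S ℝ) : Matrix S S ℝ :=
  fun s t => (1 - α) * T s t +
    α * ∑ s', T s s' *
      (if t ∈ orbitFinset Ψ s' then 1 / ((orbitFinset Ψ s').card : ℝ) else 0)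

lemma mem_orbitFinset {S : Type} [Fintype S] {Ψ : Subgroup (Equiv.Perm S)} {s t : S} :
    t ∈ orbitFinset Ψ s ↔ ∃ ψ ∈ Ψ, ψ s = t := by
  classical
  simp [orbitFinset]

lemma self_mem_orbitFinset {S : Type} [Fintype S] (Ψ : Subgroup (Equiv.Perm S)) (s : S) :
    s ∈ orbitFinset Ψ s :=
  mem_orbitFinset.mpr ⟨1, Ψ.one_mem, rfl⟩

lemma orbit_symm {S : Type} [Fintype S] {Ψ : Subgroup (Equiv.Perm S)} {s t : S}
    (h : t ∈ orbitFinset Ψ s) : s ∈ orbitFinset Ψ t := by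
  obtain ⟨ψ, hψ, hst⟩ := mem_orbitFinset.mp h
  exact mem_orbitFinset.mpr ⟨ψ⁻¹, Ψ.inv_mem hψ, by simp [← hst]⟩

lemma orbit_eq_of_mem {S : Type} [Fintype S] {Ψ : Subgroup (Equiv.Perm S)} {s t : S}
    (h : t ∈ orbitFinset Ψ s) : orbitFinset Ψ s = orbitFinset Ψ t := by
  obtain ⟨ψ, hψ, hst⟩ := mem_orbitFinset.mp h
  ext r
  simp only [mem_orbitFinset]
  constructor
  · rintro ⟨φ, hφ, rfl⟩
    exact ⟨φ * ψ⁻¹, Ψ.mul_mem hφ (Ψ.inv_mem hψ), by simp [← hst]⟩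
  · rintro ⟨φ, hφ, rfl⟩
    exact ⟨φ * ψ, Ψ.mul_mem hφ hψ, by simp [hst]⟩

lemma pow_nonneg_entry {S : Type} [Fintype S] [DecidableEq S] {B : Matrix S S ℝ}
    (hB : ∀ s t, 0 ≤ B s t) : ∀ n s t, 0 ≤ (B ^ n) s t := by
  intro n
  induction n with
  | zero => intro s t; simp [Matrix.one_apply]; positivity
  | succ n ih =>
      intro s t
      rw [pow_succ, Matrix.mul_apply]
      exact Finset.sum_nonneg fun k _ => mul_nonneg (ih s k) (hB k t)

lemma pow_entry_le {S : Type} [Fintype S] [DecidableEq S] {A B : Matrix S S ℝ} {c : ℝ}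
    (hc : 0 ≤ c) (hB : ∀ s t, 0 ≤ B s t) (h : ∀ s t, c * B s t ≤ A s t) :
    ∀ n s t, c ^ n * (B ^ n) s t ≤ (A ^ n) s t := by
  intro n
  induction n with
  | zero => intro s t; simp
  | succ n ih =>
      intro s t
      have hA : (A ^ (n+1)) s t = ∑ k, (A ^ n) s k * A k t := by
        rw [pow_succ, Matrix.mul_apply]
      have hBp : (B ^ (n+1)) s t = ∑ k, (B ^ n) s k * B k t := by
        rw [pow_succ, Matrix.mul_apply]
      rw [hA, hBp, Finset.mul_sum]
      apply Finset.sum_le_sum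
      intro k _
      have h1 : c ^ n * (B ^ n) s k ≤ (A ^ n) s k := ih s k
      have h2 : c * B k t ≤ A k t := h k t
      have hb1 : 0 ≤ (B ^ n) s k := pow_nonneg_entry hB n s k
      have hb2 : 0 ≤ c * B k t := mul_nonneg hc (hB k t)
      calc c ^ (n + 1) * ((B ^ n) s k * B k t)
          = (c ^ n * (B ^ n) s k) * (c * B k t) := by ring
        _ ≤ (A ^ n) s k * (A k t) :=
            mul_le_mul h1 h2 hb2 (le_trans (mul_nonneg (pow_nonneg hc n) hb1) h1)

/-- Let `M` be a regular Markov chain on a finite state space `S` with stationary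
distribution `π`, and let `Ψ` be a group of `π`-preserving permutations of `S`. Then for any
`α ∈ [0,1]`, the BV-MCMC(α) chain `M'` is regular and has stationary distribution `π`. -/
theorem bv_mcmc_regular_and_stationary {S : Type} [Fintype S] [DecidableEq S]
    (T : Matrix S S ℝ) (π : S → ℝ)
    (hT0 : ∀ s t, 0 ≤ T s t) (hT1 : ∀ s, ∑ t, T s t = 1)
    (hreg : ∃ n : ℕ, 0 < n ∧ ∀ s t, 0 < (T ^ n) s t)
    (hπ0 : ∀ s, 0 ≤ π s) (hπ1 : ∑ s, π s = 1)
    (hstat : ∀ t, ∑ s, π s * T s t = π t)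
    (Ψ : Subgroup (Equiv.Perm S))
    (hΨ : ∀ ψ ∈ Ψ, ∀ s, π (ψ s) = π s)
    (α : ℝ) (hα0 : 0 ≤ α) (hα1 : α ≤ 1) :
    (∃ n : ℕ, 0 < n ∧ ∀ s t, 0 < ((bvKernel Ψ α T) ^ n) s t) ∧
    ∀ t, ∑ s, π s * bvKernel Ψ α T s t = π t := by
  classical
  set u : S → S → ℝ := fun s t =>
    if t ∈ orbitFinset Ψ s then 1 / ((orbitFinset Ψ s).card : ℝ) else 0 with hu
  -- nonemptiness
  have hS : Nonempty S := by
    by_contra h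
    rw [not_nonempty_iff] at h
    rw [Finset.univ_eq_empty, Finset.sum_empty] at hπ1
    norm_num at hπ1
  have hcardS : (0 : ℝ) < (Fintype.card S : ℝ) := by
    exact_mod_cast Fintype.card_pos_iff.mpr hS
  have horbcard : ∀ t : S, 0 < ((orbitFinset Ψ t).card : ℝ) := by
    intro t
    have : 0 < (orbitFinset Ψ t).card :=
      Finset.card_pos.mpr ⟨t, self_mem_orbitFinset Ψ t⟩
    exact_mod_cast this
  have horbcardS : ∀ t : S, ((orbitFinset Ψ t).card : ℝ) ≤ (Fintype.card S : ℝ) := by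
    intro t
    exact_mod_cast (Finset.card_le_univ _).trans_eq (Finset.card_univ)
  -- key orbit sum
  have hkey : ∀ t, ∑ s, π s * u s t = π t := by
    intro t
    have hfilter : (Finset.univ.filter (fun s => t ∈ orbitFinset Ψ s)) = orbitFinset Ψ t := by
      ext s
      simp only [Finset.mem_filter, Finset.mem_univ, true_and]
      exact ⟨orbit_symm, orbit_symm⟩
    calc ∑ s, π s * u s t
        = ∑ s ∈ Finset.univ.filter (fun s => t ∈ orbitFinset Ψ s),
            π s * (1 / ((orbitFinset Ψ s).card : ℝ)) := by
          rw [Finset.sum_filter]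
          apply Finset.sum_congr rfl
          intro s _
          simp only [hu, mul_ite, mul_zero]
      _ = ∑ s ∈ orbitFinset Ψ t, π t * (1 / ((orbitFinset Ψ t).card : ℝ)) := by
          rw [hfilter]
          apply Finset.sum_congr rfl
          intro s hs
          obtain ⟨ψ, hψ, hts⟩ := mem_orbitFinset.mp hs
          have h1 : π s = π t := by rw [← hts, hΨ ψ hψ t]
          have h2 : orbitFinset Ψ s = orbitFinset Ψ t := orbit_eq_of_mem (orbit_symm hs)
          rw [h1, h2]
      _ = π t := by
          rw [Finset.sum_const, nsmul_eq_mul]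
          have hne : ((orbitFinset Ψ t).card : ℝ) ≠ 0 := (horbcard t).ne'
          field_simp
  constructor
  · -- regularity
    obtain ⟨n, hn, hpos⟩ := hreg
    set c : ℝ := (1 - α) + α / (Fintype.card S : ℝ) with hc
    have hc0 : 0 < c := by
      rcases lt_or_eq_of_le hα1 with h | h
      · have h2 : 0 ≤ α / (Fintype.card S : ℝ) := div_nonneg hα0 hcardS.le
        have h3 : 0 < 1 - α := by linarith
        rw [hc]; linarith
      · have h4 : (0:ℝ) < 1 / (Fintype.card S : ℝ) := by positivity
        have h5 : (1:ℝ) - 1 + 1 / (Fintype.card S : ℝ) = 1 / (Fintype.card S : ℝ) := by ring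
        rw [hc, h, h5]
        exact h4
    have hdom : ∀ s t, c * T s t ≤ bvKernel Ψ α T s t := by
      intro s t
      have hterm : T s t * u t t ≤ ∑ s', T s s' * u s' t := by
        apply Finset.single_le_sum (f := fun s' => T s s' * u s' t)
        · intro k _
          apply mul_nonneg (hT0 s k)
          simp only [hu]
          split
          · positivity
          · exact le_refl 0
        · exact Finset.mem_univ t
      have hutt : u t t = 1 / ((orbitFinset Ψ t).card : ℝ) := by
        simp [hu, self_mem_orbitFinset]
      have h2 : α / (Fintype.card S : ℝ) * T s t ≤ α * (T s t * u t t) := by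
        rw [hutt]
        have h3 : 1 / (Fintype.card S : ℝ) ≤ 1 / ((orbitFinset Ψ t).card : ℝ) :=
          one_div_le_one_div_of_le (horbcard t) (horbcardS t)
        have := mul_le_mul_of_nonneg_left (mul_le_mul_of_nonneg_left h3 (hT0 s t)) hα0
        calc α / (Fintype.card S : ℝ) * T s t
            = α * (T s t * (1 / (Fintype.card S : ℝ))) := by ring
          _ ≤ α * (T s t * (1 / ((orbitFinset Ψ t).card : ℝ))) := this
      calc c * T s t = (1 - α) * T s t + α / (Fintype.card S : ℝ) * T s t := by ring
        _ ≤ (1 - α) * T s t + α * (T s t * u t t) := by linarith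
        _ ≤ (1 - α) * T s t + α * ∑ s', T s s' * u s' t := by
            have := mul_le_mul_of_nonneg_left hterm hα0
            linarith
        _ = bvKernel Ψ α T s t := by simp only [bvKernel, hu]
    refine ⟨n, hn, fun s t => ?_⟩
    have := pow_entry_le hc0.le hT0 hdom n s t
    have hpow : 0 < c ^ n * (T ^ n) s t := mul_pos (pow_pos hc0 n) (hpos s t)
    linarith
  · -- stationarity
    intro t
    have expand : ∀ s, π s * bvKernel Ψ α T s t
        = π s * ((1 - α) * T s t) + α * ∑ s', π s * T s s' * u s' t := by
      intro s
      have h0 : π s * bvKernel Ψ α T s t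
          = π s * ((1 - α) * T s t) + α * (π s * ∑ s', T s s' * u s' t) := by
        simp only [bvKernel, hu]; ring
      rw [h0, Finset.mul_sum]
      have h1 : ∑ s', π s * (T s s' * u s' t) = ∑ s', π s * T s s' * u s' t :=
        Finset.sum_congr rfl fun s' _ => by ring
      rw [h1]
    rw [Finset.sum_congr rfl (fun s _ => expand s), Finset.sum_add_distrib]
    have h1 : ∑ s, π s * ((1 - α) * T s t) = (1 - α) * π t := by
      rw [← hstat t, Finset.mul_sum]
      apply Finset.sum_congr rfl
      intros; ring
    have h2 : ∑ s, α * ∑ s', π s * T s s' * u s' t = α * π t := by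
      rw [← Finset.mul_sum, Finset.sum_comm]
      congr 1
      calc ∑ s', ∑ s, π s * T s s' * u s' t
          = ∑ s', (∑ s, π s * T s s') * u s' t := by
            apply Finset.sum_congr rfl
            intro s' _
            rw [Finset.sum_mul]
        _ = ∑ s', π s' * u s' t := by
            apply Finset.sum_congr rfl
            intro s' _
            rw [hstat s']
        _ = π t := hkey t
    rw [h1, h2]
    ring
end

section
/- If a BV-permutation ψ on the block-value set Δ_V is valid, then its action on any state s yields a well-defined state: every variable receives exactly one value, and the induced map on states is a bijection of the state space. -/
private lemma sigma_eq_of_fst_eq {α : Type*} {F : α → Type*} (x : Σ a, F a) (a : α)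
    (h : x.1 = a) : x = ⟨a, h ▸ x.2⟩ := by
  cases x; subst h; rfl



/-- If a BV permutation `ψ` on the block-value set is valid, then its action on states is
well defined (there is a unique map `A` on transformed states such that a BV pair `(B,b)`
is consistent with `sh` iff `ψ(B,b)` is consistent with `A sh`, so every variable receives
exactly one value) and the induced map on states is a bijection of the state space. -/
theorem valid_bv_action_welldefined_and_bijective
    {V D L : Type} [Fintype V] [Fintype D] [Fintype L] [Nonempty D]
    (blk : V → L)
    (ψ : Equiv.Perm (Σ l : L, ({x : V // blk x = l} → D)))
    (hvalid : ValidBV blk ψ) :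
    ∃ A : ((l : L) → {x : V // blk x = l} → D) → ((l : L) → {x : V // blk x = l} → D),
      (∀ (sh : (l : L) → {x : V // blk x = l} → D) (l : L) (b : {x : V // blk x = l} → D),
        (sh l = b ↔ A sh (ψ ⟨l, b⟩).1 = (ψ ⟨l, b⟩).2)) ∧
      Function.Bijective A ∧
      ∀ A' : ((l : L) → {x : V // blk x = l} → D) → ((l : L) → {x : V // blk x = l} → D),
        (∀ (sh : (l : L) → {x : V // blk x = l} → D) (l : L) (b : {x : V // blk x = l} → D),
          (sh l = b ↔ A' sh (ψ ⟨l, b⟩).1 = (ψ ⟨l, b⟩).2)) → A' = A := by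
  classical
  -- the first component of ψ ⟨l, b⟩ does not depend on b
  have hfst : ∀ (l : L) (b b' : {x : V // blk x = l} → D),
      (ψ ⟨l, b⟩).1 = (ψ ⟨l, b'⟩).1 := by
    intro l b b'
    obtain ⟨b3, hb3⟩ := hvalid l b (ψ ⟨l, b⟩).1 (ψ ⟨l, b⟩).2 rfl b'
    rw [hb3]
  set σ : L → L := fun l => (ψ ⟨l, fun _ => Classical.arbitrary D⟩).1 with hσdef
  have key : ∀ (l : L) (b : {x : V // blk x = l} → D), (ψ ⟨l, b⟩).1 = σ l :=
    fun l b => hfst l b _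
  have hσsurj : Function.Surjective σ := by
    intro l'
    refine ⟨(ψ.symm ⟨l', fun _ => Classical.arbitrary D⟩).1, ?_⟩
    rw [← key _ (ψ.symm ⟨l', fun _ => Classical.arbitrary D⟩).2]
    simp [Sigma.eta]
  have hσbij : Function.Bijective σ := (Finite.surjective_iff_bijective).1 hσsurj
  set e := Equiv.ofBijective σ hσbij with he
  have hτ : ∀ l', σ (e.symm l') = l' := fun l' => e.apply_symm_apply l'
  have hτ2 : ∀ l, e.symm (σ l) = l := fun l => e.symm_apply_apply l
  -- define A
  have hAex : ∀ (sh : (l : L) → {x : V // blk x = l} → D) (l' : L),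
      ∃ c : {x : V // blk x = l'} → D, ψ ⟨e.symm l', sh (e.symm l')⟩ = ⟨l', c⟩ := by
    intro sh l'
    have h1 : (ψ ⟨e.symm l', sh (e.symm l')⟩).1 = l' := (key _ _).trans (hτ l')
    exact ⟨h1 ▸ (ψ ⟨e.symm l', sh (e.symm l')⟩).2, sigma_eq_of_fst_eq _ _ h1⟩
  choose A hA using hAex
  have hτψ : ∀ (l : L) (b : {x : V // blk x = l} → D), e.symm (ψ ⟨l, b⟩).1 = l := by
    intro l b; rw [key]; exact hτ2 l
  have hmain : ∀ sh (l : L) (b : {x : V // blk x = l} → D),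
      ψ ⟨l, sh l⟩ = ⟨(ψ ⟨l, b⟩).1, A sh (ψ ⟨l, b⟩).1⟩ := by
    intro sh l b
    have := hA sh (ψ ⟨l, b⟩).1
    rwa [hτψ l b] at this
  have hiff : ∀ sh (l : L) (b : {x : V // blk x = l} → D),
      sh l = b ↔ A sh (ψ ⟨l, b⟩).1 = (ψ ⟨l, b⟩).2 := by
    intro sh l b
    constructor
    · intro h
      subst h
      have h2 := hmain sh l (sh l)
      have h3 := (Sigma.eta (ψ ⟨l, sh l⟩)).symm.trans h2
      exact (eq_of_heq (Sigma.mk.inj_iff.mp h3).2).symm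
    · intro h
      have h2 := hmain sh l b
      rw [h, Sigma.eta] at h2
      have := ψ.injective h2
      exact eq_of_heq (Sigma.mk.inj_iff.mp this).2
  have hinj : Function.Injective A := by
    intro sh sh' h
    funext l
    have h1 := hA sh (σ l)
    have h2 := hA sh' (σ l)
    rw [hτ2 l] at h1 h2
    rw [h] at h1
    have := ψ.injective (h1.trans h2.symm)
    exact eq_of_heq (Sigma.mk.inj_iff.mp this).2
  refine ⟨A, hiff, (Finite.injective_iff_bijective).1 hinj, ?_⟩
  intro A' hA'
  funext sh l'
  have k1 := (hA' sh (e.symm l') (sh (e.symm l'))).mp rfl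
  rw [hA sh l'] at k1
  exact k1
end
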